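/- For every d ≥ 2 and positive integers K⁽¹⁾,…,K⁽ᵈ⁾, there exists a finite composition of additive integer coupling layers on ℤ^d (each of the form z_a = x_a, z_b = x_b + t(x_a) for some split (a,b) and integer-valued t) whose restriction to {0,…,K⁽¹⁾−1} × … × {0,…,K⁽ᵈ⁾−1} equals x ↦ (x₁ + K⁽¹⁾x₂ + … + (∏_{i=1}^{d-1}K⁽ⁱ⁾)x_d, 0, …, 0). -/

import Mathlib

open scoped Classical

/-- An additive integer coupling layer on `ℤ^d`: it fixes the coordinates in some set `a`
and adds to the remaining coordinates an integer-valued translation `t` that depends only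
on the `a`-coordinates. -/
def IsCouplingLayer (d : ℕ) (f : (Fin d → ℤ) → (Fin d → ℤ)) : Prop :=
  ∃ (a : Set (Fin d)) (t : (Fin d → ℤ) → (Fin d → ℤ)),
    (∀ x y : Fin d → ℤ, (∀ i ∈ a, x i = y i) → ∀ i, t x i = t y i) ∧
    ∀ x i, f x i = if i ∈ a then x i else x i + t x i

/-- extension of `K` to `ℕ` by `1`. -/
def Kext (d : ℕ) (K : Fin d → ℤ) (n : ℕ) : ℤ := if h : n < d then K ⟨n, h⟩ else 1

/-- extension of `x` to `ℕ` by `0`. -/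
def xext (d : ℕ) (x : Fin d → ℤ) (n : ℕ) : ℤ := if h : n < d then x ⟨n, h⟩ else 0

/-- partial products of the radices. -/
def Cc (d : ℕ) (K : Fin d → ℤ) (n : ℕ) : ℤ := ∏ k ∈ Finset.range n, Kext d K k

/-- partial mixed-radix sums. -/
def Sn (d : ℕ) (K : Fin d → ℤ) (x : Fin d → ℤ) (n : ℕ) : ℤ :=
  ∑ l ∈ Finset.range n, Cc d K l * xext d x l

lemma Kext_pos (d : ℕ) (K : Fin d → ℤ) (hK : ∀ i, 0 < K i) (n : ℕ) : 0 < Kext d K n := by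
  unfold Kext; split <;> simp [hK]

lemma Cc_pos (d : ℕ) (K : Fin d → ℤ) (hK : ∀ i, 0 < K i) (n : ℕ) : 0 < Cc d K n := by
  unfold Cc
  exact Finset.prod_pos fun i _ => Kext_pos d K hK i

lemma xext_bound (d : ℕ) (K : Fin d → ℤ) (x : Fin d → ℤ)
    (hx : ∀ i, 0 ≤ x i ∧ x i < K i) (n : ℕ) :
    0 ≤ xext d x n ∧ xext d x n < Kext d K n := by
  unfold xext Kext
  split
  · exact hx _
  · norm_num

lemma Sn_bound (d : ℕ) (K : Fin d → ℤ) (x : Fin d → ℤ) (hK : ∀ i, 0 < K i)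
    (hx : ∀ i, 0 ≤ x i ∧ x i < K i) (n : ℕ) :
    0 ≤ Sn d K x n ∧ Sn d K x n < Cc d K n := by
  induction n with
  | zero => simp [Sn, Cc]
  | succ n ih =>
    have hC : 0 < Cc d K n := Cc_pos d K hK n
    have hxb := xext_bound d K x hx n
    have hS1 : Sn d K x (n + 1) = Sn d K x n + Cc d K n * xext d x n := by
      simp [Sn, Finset.sum_range_succ]
    have hC1 : Cc d K (n + 1) = Cc d K n * Kext d K n := by
      simp [Cc, Finset.prod_range_succ]
    constructor
    · rw [hS1]
      have : 0 ≤ Cc d K n * xext d x n := mul_nonneg hC.le hxb.1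
      linarith [ih.1]
    · rw [hS1, hC1]
      have h1 : Cc d K n * xext d x n ≤ Cc d K n * (Kext d K n - 1) :=
        mul_le_mul_of_nonneg_left (by linarith [hxb.2]) hC.le
      have h2 : Sn d K x n ≤ Cc d K n - 1 := by linarith [ih.2]
      nlinarith

lemma Cc_prod_Iio (d : ℕ) (K : Fin d → ℤ) (j : Fin d) :
    (∏ l' ∈ Finset.Iio j, K l') = Cc d K j.val := by
  have h1 : (∏ l' ∈ Finset.Iio j, K l') = ∏ l' ∈ Finset.Iio j, Kext d K l'.val := by
    apply Finset.prod_congr rfl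
    intro l' _
    simp [Kext, l'.isLt]
  rw [h1, Cc, ← Nat.Iio_eq_range, ← Fin.map_valEmbedding_Iio, Finset.prod_map]
  rfl

/-- first layer: add `c * x j` to coordinate `j0`, fixing everything else. -/
def cl1 {d : ℕ} (j0 j : Fin d) (c : ℤ) : (Fin d → ℤ) → (Fin d → ℤ) :=
  fun x i => if i = j then x i else x i + (if i = j0 then c * x j else 0)

/-- second layer: replace coordinate `j` by `x j - x j0 / c`, fixing everything else. -/
def cl2 {d : ℕ} (j0 j : Fin d) (c : ℤ) : (Fin d → ℤ) → (Fin d → ℤ) :=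
  fun x i => if i = j then x i + (-(x j0 / c)) else x i

lemma cl1_coupling {d : ℕ} (j0 j : Fin d) (c : ℤ) (h : j ≠ j0) :
    IsCouplingLayer d (cl1 j0 j c) := by
  refine ⟨({j0}ᶜ : Set (Fin d)), fun x i => if i = j0 then c * x j else 0, ?_, ?_⟩
  · intro x y hxy i
    have : x j = y j := hxy j (by simpa using h)
    simp [this]
  · intro x i
    by_cases hij : i = j
    · subst hij
      simp [cl1, h]
    · by_cases hij0 : i = j0 <;> simp [cl1, hij, hij0, Ne.symm h]

lemma cl2_coupling {d : ℕ} (j0 j : Fin d) (c : ℤ) (h : j ≠ j0) :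
    IsCouplingLayer d (cl2 j0 j c) := by
  refine ⟨({j}ᶜ : Set (Fin d)), fun x _ => -(x j0 / c), ?_, ?_⟩
  · intro x y hxy i
    have : x j0 = y j0 := hxy j0 (by simpa using h.symm)
    simp [this]
  · intro x i
    by_cases hij : i = j <;> simp [cl2, hij]

/-- Lemma 2: for every `d ≥ 2` and positive integers `K⁽¹⁾,…,K⁽ᵈ⁾` there is a finite
composition of additive integer coupling layers on `ℤ^d` whose restriction to
`{0,…,K⁽¹⁾−1} × … × {0,…,K⁽ᵈ⁾−1}` is `x ↦ (x₁ + K⁽¹⁾x₂ + … + (∏_{i<d}K⁽ⁱ⁾)x_d, 0, …, 0)`. -/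
theorem lemma2_couplings_flatten (d : ℕ) (hd : 2 ≤ d) (K : Fin d → ℤ) (hK : ∀ i, 0 < K i) :
    ∃ l : List ((Fin d → ℤ) → (Fin d → ℤ)),
      (∀ f ∈ l, IsCouplingLayer d f) ∧
      ∀ x : Fin d → ℤ, (∀ i, 0 ≤ x i ∧ x i < K i) →
        l.foldl (fun y f => f y) x =
          fun i => if i = (⟨0, by omega⟩ : Fin d)
            then ∑ j, (∏ l' ∈ Finset.Iio j, K l') * x j else 0 := by
  set j0 : Fin d := ⟨0, by omega⟩ with hj0
  -- index `m ↦ ⟨m+1, _⟩` (with junk value beyond the range)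
  set jf : ℕ → Fin d := fun m => if h : m + 1 < d then ⟨m + 1, h⟩ else ⟨0, by omega⟩ with hjf
  set L : ℕ → List ((Fin d → ℤ) → (Fin d → ℤ)) := fun n =>
    (List.range n).flatMap (fun m => [cl1 j0 (jf m) (Cc d K (m + 1)), cl2 j0 (jf m) (Cc d K (m + 1))]) with hL
  refine ⟨L (d - 1), ?_, ?_⟩
  · intro f hf
    simp only [hL, List.mem_flatMap, List.mem_range] at hf
    obtain ⟨m, hm, hf⟩ := hf
    have hmd : m + 1 < d := by omega
    have hvm : (jf m).val = m + 1 := by simp [hjf, dif_pos hmd]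
    have hne : jf m ≠ j0 := by
      intro hc
      rw [hc, hj0] at hvm
      simp at hvm
    simp only [List.mem_cons, List.mem_singleton] at hf
    rcases hf with h | h | h
    · exact h ▸ cl1_coupling _ _ _ hne
    · exact h ▸ cl2_coupling _ _ _ hne
    · exact absurd h List.not_mem_nil
  · intro x hx
    -- the invariant
    have key : ∀ n, n ≤ d - 1 →
        (L n).foldl (fun y f => f y) x =
          fun i => if i.val = 0 then Sn d K x (n + 1) else if i.val ≤ n then 0 else x i := by
      intro n
      induction n with
      | zero =>
        intro _
        funext i
        simp only [hL, List.range_zero, List.flatMap_nil, List.foldl_nil]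
        by_cases h0 : i.val = 0
        · have : i = j0 := Fin.ext h0
          subst this
          simp [Sn, Cc, xext, j0, show (0:ℕ) < d by omega]
        · simp [h0, Nat.le_zero]
      | succ n ih =>
        intro hn
        have hn' : n ≤ d - 1 := by omega
        have hnd : n + 1 < d := by omega
        have hLs : L (n + 1) = L n ++ [cl1 j0 (jf n) (Cc d K (n + 1)), cl2 j0 (jf n) (Cc d K (n + 1))] := by
          simp [hL, List.range_succ]
        rw [hLs, List.foldl_append, ih hn']
        set y : Fin d → ℤ := fun i =>
          if i.val = 0 then Sn d K x (n + 1) else if i.val ≤ n then 0 else x i with hy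
        have hjfn : (jf n).val = n + 1 := by
          simp [hjf, dif_pos hnd]
        have hyjf : y (jf n) = x (jf n) := by
          simp only [hy, hjfn]
          rw [if_neg (by omega), if_neg (by omega)]
        simp only [List.foldl_cons, List.foldl_nil]
        funext i
        have hxjf : xext d x (n + 1) = x (jf n) := by
          simp only [xext, dif_pos hnd]
          congr 1
          exact (Fin.ext hjfn).symm
        have hSsucc : Sn d K x (n + 2) = Sn d K x (n + 1) + Cc d K (n + 1) * x (jf n) := by
          simp [Sn, Finset.sum_range_succ, hxjf]
        have hSb := Sn_bound d K x hK hx (n + 1)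
        have hCpos := Cc_pos d K hK (n + 1)
        -- value of the composite at i
        have hz0 : cl1 j0 (jf n) (Cc d K (n + 1)) y j0 = Sn d K x (n + 2) := by
          have hne : j0 ≠ jf n := by
            intro hc
            have hv := hjfn
            rw [← hc, hj0] at hv
            simp at hv
          have hyj0 : y j0 = Sn d K x (n + 1) := by simp [hy, hj0]
          simp [cl1, hne, hyjf, hyj0, hSsucc]
        have hdiv : Sn d K x (n + 2) / Cc d K (n + 1) = x (jf n) := by
          rw [hSsucc, mul_comm, Int.add_mul_ediv_right _ _ (ne_of_gt hCpos),
            Int.ediv_eq_zero_of_lt hSb.1 hSb.2, zero_add]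
        by_cases hji : i = jf n
        · subst hji
          have h1 : cl1 j0 (jf n) (Cc d K (n + 1)) y (jf n) = x (jf n) := by
            simp [cl1, hyjf]
          simp only [cl2]
          rw [if_pos trivial, h1, hz0, hdiv]
          simp [hjfn]
        · simp only [cl2, if_neg hji]
          by_cases hij0 : i = j0
          · subst hij0
            rw [hz0]
            simp [hj0]
          · have hi0 : i.val ≠ 0 := fun h => hij0 (Fin.ext h)
            have hival : i.val ≠ n + 1 := fun h => hji (Fin.ext (h.trans hjfn.symm))
            have h1 : cl1 j0 (jf n) (Cc d K (n + 1)) y i = y i := by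
              simp [cl1, hji, hij0]
            rw [h1]
            simp only [hy, if_neg hi0]
            by_cases hle : i.val ≤ n
            · rw [if_pos hle, if_pos (by omega)]
            · rw [if_neg hle, if_neg (by omega)]
    have hfinal := key (d - 1) le_rfl
    rw [hfinal]
    funext i
    have hsum : (∑ j, (∏ l' ∈ Finset.Iio j, K l') * x j) = Sn d K x d := by
      rw [Sn]
      rw [← Fin.sum_univ_eq_sum_range (fun l => Cc d K l * xext d x l) d]
      apply Finset.sum_congr rfl
      intro j _
      rw [Cc_prod_Iio]
      congr 1
      simp [xext, j.isLt]
    by_cases h0 : i = j0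
    · subst h0
      have hc1 : (j0 : Fin d).val = 0 := rfl
      rw [if_pos hc1, if_pos rfl, hsum]
      congr 1
      omega
    · have hi0 : i.val ≠ 0 := fun h => h0 (Fin.ext h)
      have hlt := i.isLt
      rw [if_neg hi0, if_pos (by omega : i.val ≤ d - 1), if_neg h0]
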